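/- Fix constants c > 0 and α > 0 and let p = p(n) = c n^{-1/α}(1 + o(1)). Let H be a strictly balanced graph with 0 < v_H ≤ n vertices, e_H > 0 edges, no isolated vertices, and density d_H = e_H/v_H < α. Let W be the number of copies of H in G(n,p). Then E(W) → ∞, and there exists a constant C > 0 such that for every ε > 0 and all sufficiently large n, P(|W/E(W) − 1| ≥ ε) ≤ C ε^{-2} n^{-γ}, where γ = min_{k ∈ K} (ℓ_k − k/α) > 0, K is the set of k ≥ 1 for which two copies of H in K_n can share exactly k edges, and ℓ_k is the minimum number of vertices incident to such k shared edges. -/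

import Mathlib

open MeasureTheory ProbabilityTheory Filter
open scoped ENNReal NNReal

/-- The Bernoulli distribution on `Bool` with success probability `p`. -/
noncomputable def bernoulliB (p : ℝ) : Measure Bool :=
  ENNReal.ofReal p • Measure.dirac true + ENNReal.ofReal (1 - p) • Measure.dirac false

instance (p : ℝ) : IsFiniteMeasure (bernoulliB p) := by
  constructor
  simp only [bernoulliB, Measure.add_apply, Measure.smul_apply, smul_eq_mul]
  finiteness

/-- The sample space of the Erdős–Rényi random graph `G(n, p)`: one Boolean coordinate for
each potential edge (non-diagonal unordered pair) of the complete graph on `n` vertices. -/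
abbrev EdgeSpace (n : ℕ) := ({e : Sym2 (Fin n) // ¬ e.IsDiag} → Bool)

/-- The Erdős–Rényi measure: each potential edge is present independently with
probability `p`. -/
noncomputable def erMeasure (n : ℕ) (p : ℝ) : Measure (EdgeSpace n) :=
  Measure.pi fun _ => bernoulliB p

/-- The random graph determined by a point of the sample space. -/
def erGraph {n : ℕ} (ω : EdgeSpace n) : SimpleGraph (Fin n) :=
  SimpleGraph.fromEdgeSet {e | ∃ h : ¬ e.IsDiag, ω ⟨e, h⟩ = true}

/-- `B` is a copy of `H` in the complete graph `K_n`: a subgraph of `K_n`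
isomorphic to `H`. -/
def IsCopy {n : ℕ} {V : Type*} (H : SimpleGraph V)
    (B : (⊤ : SimpleGraph (Fin n)).Subgraph) : Prop :=
  Nonempty (B.coe ≃g H)

/-- The number of copies of `H` in `K_n` all of whose edges are present in `G`. -/
noncomputable def numCopies {n : ℕ} {V : Type*} (H : SimpleGraph V)
    (G : SimpleGraph (Fin n)) : ℕ :=
  Set.ncard {B : (⊤ : SimpleGraph (Fin n)).Subgraph | IsCopy H B ∧ B.edgeSet ⊆ G.edgeSet}

/-- The number of edges shared by two subgraphs of `K_n`. -/
noncomputable def sharedEdges {n : ℕ} (A B : (⊤ : SimpleGraph (Fin n)).Subgraph) : ℕ :=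
  (A ⊓ B).edgeSet.ncard

/-- The number of vertices incident to the edges shared by two subgraphs of `K_n`. -/
noncomputable def sharedVerts {n : ℕ} (A B : (⊤ : SimpleGraph (Fin n)).Subgraph) : ℕ :=
  (A ⊓ B).support.ncard

/-- `K_{i,j}`: the set of possible numbers `k ≥ 1` of shared edges between a copy of `Hi`
and a copy of `Hj` in `K_n`. -/
def sharedK {V W : Type*} (Hi : SimpleGraph V) (Hj : SimpleGraph W) (n : ℕ) : Set ℕ :=
  {k | 1 ≤ k ∧ ∃ A B : (⊤ : SimpleGraph (Fin n)).Subgraph,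
    IsCopy Hi A ∧ IsCopy Hj B ∧ sharedEdges A B = k}

/-- `ℓ_{k,i,j}`: the minimum number of vertices incident to `k` shared edges between a copy
of `Hi` and a copy of `Hj` in `K_n` (`0` if no such pair of copies exists, by the convention
`sInf ∅ = 0` in `ℕ`). -/
noncomputable def minSharedVerts {V W : Type*} (Hi : SimpleGraph V) (Hj : SimpleGraph W)
    (n k : ℕ) : ℕ :=
  sInf {m | ∃ A B : (⊤ : SimpleGraph (Fin n)).Subgraph,
    IsCopy Hi A ∧ IsCopy Hj B ∧ sharedEdges A B = k ∧ sharedVerts A B = m}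

/-- A graph `H` is *strictly balanced* if every proper subgraph has density strictly
smaller than the density `e_H / v_H` of `H`. -/
def StrictlyBalanced {V : Type*} [Fintype V] (H : SimpleGraph V) : Prop :=
  ∀ B : H.Subgraph, B ≠ ⊤ → B.edgeSet.Nonempty →
    (B.edgeSet.ncard : ℝ) / (B.verts.ncard : ℝ)
      < (H.edgeSet.ncard : ℝ) / (Fintype.card V : ℝ)


-- ### Auxiliary development ###




lemma bern_true (p : ℝ) : bernoulliB p {true} = ENNReal.ofReal p := by
  simp [bernoulliB, Measure.dirac_apply]

lemma bern_univ (p : ℝ) (h0 : 0 ≤ p) (h1 : p ≤ 1) (s : Set Bool) (hs : s = Set.univ) :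
    bernoulliB p s = 1 := by
  subst hs
  simp [bernoulliB, Measure.dirac_apply]
  rw [← ENNReal.ofReal_add h0 (by linarith)]
  simp

lemma erMeasure_cylinder (n : ℕ) (p : ℝ) (h0 : 0 ≤ p) (h1 : p ≤ 1)
    (S : Finset {e : Sym2 (Fin n) // ¬ e.IsDiag}) :
    erMeasure n p {ω | ∀ e ∈ S, ω e = true} = ENNReal.ofReal p ^ S.card := by
  have hset : {ω : EdgeSpace n | ∀ e ∈ S, ω e = true}
      = Set.pi Set.univ (fun e => if e ∈ S then {true} else Set.univ) := by
    ext ω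
    simp only [Set.mem_setOf_eq, Set.mem_pi, Set.mem_univ, forall_true_left]
    constructor
    · intro h e
      by_cases he : e ∈ S <;> simp [he, h]
    · intro h e he
      have := h e
      simp [he] at this
      exact this
  rw [erMeasure, hset, Measure.pi_pi]
  calc ∏ i, (bernoulliB p) (if i ∈ S then {true} else Set.univ)
      = ∏ i, (if i ∈ S then ENNReal.ofReal p else 1) := by
        refine Finset.prod_congr rfl fun i _ => ?_
        by_cases hi : i ∈ S <;>
          simp [hi, bern_true, bern_univ p h0 h1 _ rfl,
            bern_univ p h0 h1 {false, true} (by ext b; cases b <;> simp)]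
    _ = ENNReal.ofReal p ^ S.card := by
        rw [Finset.prod_ite_mem, Finset.univ_inter, Finset.prod_const]

lemma erMeasure_cylinder_toReal (n : ℕ) (p : ℝ) (h0 : 0 ≤ p) (h1 : p ≤ 1)
    (S : Finset {e : Sym2 (Fin n) // ¬ e.IsDiag}) :
    (erMeasure n p {ω | ∀ e ∈ S, ω e = true}).toReal = p ^ S.card := by
  rw [erMeasure_cylinder n p h0 h1 S, ← ENNReal.ofReal_pow h0, ENNReal.toReal_ofReal (by positivity)]

lemma erMeasure_prob (n : ℕ) (p : ℝ) (h0 : 0 ≤ p) (h1 : p ≤ 1) :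
    IsProbabilityMeasure (erMeasure n p) := by
  constructor
  have : (Set.univ : Set (EdgeSpace n)) = {ω | ∀ e ∈ (∅ : Finset {e : Sym2 (Fin n) // ¬ e.IsDiag}), ω e = true} := by
    simp
  rw [this, erMeasure_cylinder n p h0 h1]
  simp

open SimpleGraph

section GraphGenerics
variable {V W : Type*} {G : SimpleGraph V} {G' : SimpleGraph W}

instance subgraphFinite [Finite V] : Finite G.Subgraph := by
  have : Function.Injective (fun A : G.Subgraph => (A.verts, A.edgeSet)) := by
    intro A B h
    simp only [Prod.mk.injEq] at h
    ext x y
    · rw [h.1]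
    · rw [← Subgraph.mem_edgeSet, ← Subgraph.mem_edgeSet, h.2]
  exact Finite.of_injective _ this

lemma sgEdgeSetMap (f : G →g G') (C : G.Subgraph) :
    (C.map f).edgeSet = Sym2.map f '' C.edgeSet := by
  ext e
  induction e with
  | _ x y =>
    simp only [Subgraph.mem_edgeSet, Subgraph.map_adj, Relation.Map, Set.mem_image]
    constructor
    · rintro ⟨u, w, h, rfl, rfl⟩
      exact ⟨s(u, w), Subgraph.mem_edgeSet.2 h, rfl⟩
    · rintro ⟨e, he, hmap⟩
      induction e with
      | _ u w =>
        rw [Sym2.map_pair_eq, Sym2.eq_iff] at hmap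
        rcases hmap with ⟨rfl, rfl⟩ | ⟨rfl, rfl⟩
        · exact ⟨u, w, Subgraph.mem_edgeSet.1 he, rfl, rfl⟩
        · exact ⟨w, u, (Subgraph.mem_edgeSet.1 he).symm, rfl, rfl⟩

lemma sgSupportMap (f : G →g G') (C : G.Subgraph) :
    (C.map f).support = f '' C.support := by
  ext x
  simp only [Subgraph.mem_support, Subgraph.map_adj, Relation.Map, Set.mem_image]
  constructor
  · rintro ⟨y, u, w, h, rfl, rfl⟩
    exact ⟨u, ⟨w, h⟩, rfl⟩
  · rintro ⟨u, ⟨w, h⟩, rfl⟩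
    exact ⟨f w, u, w, h, rfl, rfl⟩

lemma sgNcardEdgeSetMap (f : G →g G') (hf : Function.Injective f) (C : G.Subgraph) :
    (C.map f).edgeSet.ncard = C.edgeSet.ncard := by
  rw [sgEdgeSetMap, Set.ncard_image_of_injective _ (Sym2.map.injective hf)]

lemma sgNcardSupportMap (f : G →g G') (hf : Function.Injective f) (C : G.Subgraph) :
    (C.map f).support.ncard = C.support.ncard := by
  rw [sgSupportMap, Set.ncard_image_of_injective _ hf]

/-- Trim a subgraph down to its support. -/
def sgTrim (C : G.Subgraph) : G.Subgraph where
  verts := C.support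
  Adj := C.Adj
  adj_sub := C.adj_sub
  edge_vert := fun h => ⟨_, h⟩
  symm := C.symm

@[simp] lemma sgTrim_edgeSet (C : G.Subgraph) : (sgTrim C).edgeSet = C.edgeSet := rfl

@[simp] lemma sgTrim_verts (C : G.Subgraph) : (sgTrim C).verts = C.support := rfl

end GraphGenerics


section Copies
variable {n v : ℕ} {H : SimpleGraph (Fin v)}

lemma copy_edge_ncard {B : (⊤ : SimpleGraph (Fin n)).Subgraph} (h : IsCopy H B) :
    B.edgeSet.ncard = H.edgeSet.ncard := by
  obtain ⟨φ⟩ := h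
  have h1 : B.coe.edgeSet.ncard = B.edgeSet.ncard := by
    rw [← Subgraph.image_coe_edgeSet_coe,
      Set.ncard_image_of_injective _ (Sym2.map.injective Subtype.val_injective)]
  have h2 : B.coe.edgeSet.ncard = H.edgeSet.ncard := by
    rw [← Nat.card_coe_set_eq, ← Nat.card_coe_set_eq]
    exact Nat.card_congr φ.mapEdgeSet
  omega

lemma copy_verts_ncard {B : (⊤ : SimpleGraph (Fin n)).Subgraph} (h : IsCopy H B) :
    B.verts.ncard = v := by
  obtain ⟨φ⟩ := h
  rw [← Nat.card_coe_set_eq]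
  simpa using Nat.card_congr φ.toEquiv

/-- The canonical copy of `H` on the image of an injective function. -/
def copyOfFun (H : SimpleGraph (Fin v)) (f : Fin v → Fin n) (hf : Function.Injective f) :
    (⊤ : SimpleGraph (Fin n)).Subgraph where
  verts := Set.range f
  Adj x y := ∃ a b, H.Adj a b ∧ f a = x ∧ f b = y
  adj_sub := by
    rintro x y ⟨a, b, hab, rfl, rfl⟩
    exact SimpleGraph.top_adj _ _ |>.2 (hf.ne hab.ne)
  edge_vert := by
    rintro x y ⟨a, b, hab, rfl, rfl⟩
    exact Set.mem_range_self a
  symm := by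
    constructor
    rintro x y ⟨a, b, hab, rfl, rfl⟩
    exact ⟨b, a, hab.symm, rfl, rfl⟩

@[simp] lemma copyOfFun_verts (f : Fin v → Fin n) (hf : Function.Injective f) :
    (copyOfFun H f hf).verts = Set.range f := rfl

lemma isCopy_copyOfFun (f : Fin v → Fin n) (hf : Function.Injective f) :
    IsCopy H (copyOfFun H f hf) := by
  refine ⟨⟨(Equiv.ofInjective f hf).symm, ?_⟩⟩
  intro a b
  simp only [Subgraph.coe_adj]
  constructor
  · intro hadj
    obtain ⟨x0, -⟩ := a.2
    have : Nonempty (Fin v) := ⟨x0⟩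
    exact ⟨(Equiv.ofInjective f hf).symm a, (Equiv.ofInjective f hf).symm b, hadj,
      Function.invFun_eq a.2, Function.invFun_eq b.2⟩
  · rintro ⟨x, y, hxy, hx, hy⟩
    have ha : a = ⟨f x, Set.mem_range_self x⟩ := Subtype.ext hx.symm
    have hb : b = ⟨f y, Set.mem_range_self y⟩ := Subtype.ext hy.symm
    subst ha; subst hb
    have e1 : (Equiv.ofInjective f hf).symm ⟨f x, Set.mem_range_self x⟩ = x :=
      (Equiv.ofInjective f hf).symm_apply_apply x
    have e2 : (Equiv.ofInjective f hf).symm ⟨f y, Set.mem_range_self y⟩ = y :=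
      (Equiv.ofInjective f hf).symm_apply_apply y
    show H.Adj ((Equiv.ofInjective f hf).symm ⟨f x, Set.mem_range_self x⟩)
      ((Equiv.ofInjective f hf).symm ⟨f y, Set.mem_range_self y⟩)
    rw [e1, e2]
    exact hxy

lemma copy_eq_copyOfFun {B : (⊤ : SimpleGraph (Fin n)).Subgraph} (φ : B.coe ≃g H) :
    B = copyOfFun H (fun a => ↑(φ.symm a))
      (fun a b hab => by
        have := congrArg φ (Subtype.ext hab : φ.symm a = φ.symm b)
        simpa using this) := by
  ext x y
  · constructor
    · intro hx
      exact ⟨φ ⟨x, hx⟩, by simp⟩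
    · rintro ⟨a, rfl⟩
      exact (φ.symm a).2
  · constructor
    · intro hadj
      have hx : x ∈ B.verts := B.edge_vert hadj
      have hy : y ∈ B.verts := B.edge_vert (B.adj_symm hadj)
      refine ⟨φ ⟨x, hx⟩, φ ⟨y, hy⟩, ?_, by simp, by simp⟩
      rw [φ.map_adj_iff]
      exact hadj
    · rintro ⟨a, b, hab, hx, hy⟩
      have : B.coe.Adj (φ.symm a) (φ.symm b) := φ.symm.map_adj_iff.mpr hab
      rw [← hx, ← hy]
      exact this

end Copies




section Density
variable {n v : ℕ} {H : SimpleGraph (Fin v)}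

lemma subgraph_verts_pos {D : H.Subgraph} (hne : D.edgeSet.Nonempty) : 0 < D.verts.ncard := by
  obtain ⟨e, he⟩ := hne
  induction e with
  | _ x y =>
    rw [Subgraph.mem_edgeSet] at he
    exact Set.ncard_pos (Set.toFinite _) |>.2 ⟨x, D.edge_vert he⟩

lemma densle (hv : 0 < v) (hbal : StrictlyBalanced H)
    (D : H.Subgraph) (hne : D.edgeSet.Nonempty) :
    (D.edgeSet.ncard : ℝ) * v ≤ (H.edgeSet.ncard : ℝ) * D.verts.ncard := by
  by_cases htop : D = ⊤
  · subst htop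
    have h1 : (⊤ : H.Subgraph).edgeSet = H.edgeSet := Subgraph.edgeSet_top
    have h2 : (⊤ : H.Subgraph).verts = Set.univ := rfl
    rw [h1, h2, Set.ncard_univ, Nat.card_eq_fintype_card, Fintype.card_fin, mul_comm]
  · have hlt := hbal D htop hne
    have hv0 : (0:ℝ) < v := by exact_mod_cast hv
    have hverts : (0:ℝ) < D.verts.ncard := by exact_mod_cast subgraph_verts_pos hne
    rw [Fintype.card_fin, div_lt_div_iff₀ hverts hv0] at hlt
    exact hlt.le

/-- Core density estimate: the shared part of two copies has density at most that of `H`. -/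
lemma shared_density (hv : 0 < v) (hbal : StrictlyBalanced H)
    {A B : (⊤ : SimpleGraph (Fin n)).Subgraph} (hA : IsCopy H A)
    (hk : 1 ≤ sharedEdges A B) :
    (sharedEdges A B : ℝ) * v ≤ (H.edgeSet.ncard : ℝ) * sharedVerts A B := by
  classical
  obtain ⟨φ⟩ := hA
  have hcoe : Subgraph.coeSubgraph (Subgraph.restrict (G' := A) B) = A ⊓ B :=
    Subgraph.coeSubgraph_restrict_eq _
  set R : A.coe.Subgraph := Subgraph.restrict (G' := A) B with hR
  set D1 : H.Subgraph := R.map φ.toHom with hD1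
  have he1 : sharedEdges A B = R.edgeSet.ncard := by
    rw [sharedEdges, ← hcoe]
    exact sgNcardEdgeSetMap A.hom Subgraph.hom_injective R
  have he2 : D1.edgeSet.ncard = R.edgeSet.ncard := sgNcardEdgeSetMap φ.toHom φ.toEquiv.injective R
  have hs1 : sharedVerts A B = R.support.ncard := by
    rw [sharedVerts, ← hcoe]
    exact sgNcardSupportMap A.hom Subgraph.hom_injective R
  have hs2 : D1.support.ncard = R.support.ncard := sgNcardSupportMap φ.toHom φ.toEquiv.injective R
  have hne : (sgTrim D1).edgeSet.Nonempty := by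
    rw [sgTrim_edgeSet]
    apply Set.nonempty_of_ncard_ne_zero
    omega
  have := densle hv hbal (sgTrim D1) hne
  rw [sgTrim_edgeSet, sgTrim_verts] at this
  calc (sharedEdges A B : ℝ) * v = (D1.edgeSet.ncard : ℝ) * v := by rw [he1, he2]
    _ ≤ (H.edgeSet.ncard : ℝ) * D1.support.ncard := this
    _ = (H.edgeSet.ncard : ℝ) * sharedVerts A B := by rw [hs2, hs1]

end Density



section Gamma
variable {n v : ℕ} {H : SimpleGraph (Fin v)}

lemma sharedEdges_le {A B : (⊤ : SimpleGraph (Fin n)).Subgraph} (hA : IsCopy H A) :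
    sharedEdges A B ≤ H.edgeSet.ncard := by
  rw [← copy_edge_ncard hA]
  exact Set.ncard_le_ncard (fun e he => by
    rw [Subgraph.edgeSet_inf] at he; exact he.1) (Set.toFinite _)

lemma sharedEdges_self {A : (⊤ : SimpleGraph (Fin n)).Subgraph} (hA : IsCopy H A) :
    sharedEdges A A = H.edgeSet.ncard := by
  rw [sharedEdges, inf_idem, copy_edge_ncard hA]

lemma sharedVerts_pos {A B : (⊤ : SimpleGraph (Fin n)).Subgraph}
    (hk : 1 ≤ sharedEdges A B) : 0 < sharedVerts A B := by
  have hne : (A ⊓ B).edgeSet.Nonempty := by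
    apply Set.nonempty_of_ncard_ne_zero
    rw [sharedEdges] at hk
    omega
  obtain ⟨e, he⟩ := hne
  induction e with
  | _ x y =>
    rw [Subgraph.mem_edgeSet] at he
    exact Set.ncard_pos (Set.toFinite _) |>.2 ⟨x, ⟨y, he⟩⟩

lemma support_inf_subset (A B : (⊤ : SimpleGraph (Fin n)).Subgraph) :
    (A ⊓ B).support ⊆ A.verts ∩ B.verts := by
  rintro x ⟨y, hxy, hxy'⟩
  exact ⟨A.edge_vert hxy, B.edge_vert hxy'⟩

lemma verts_union_ncard_le {A B : (⊤ : SimpleGraph (Fin n)).Subgraph}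
    (hA : IsCopy H A) (hB : IsCopy H B) :
    (A.verts ∪ B.verts).ncard + sharedVerts A B ≤ 2 * v := by
  have h1 := Set.ncard_union_add_ncard_inter A.verts B.verts (Set.toFinite _) (Set.toFinite _)
  have h2 : sharedVerts A B ≤ (A.verts ∩ B.verts).ncard :=
    Set.ncard_le_ncard (support_inf_subset A B) (Set.toFinite _)
  have h3 := copy_verts_ncard hA
  have h4 := copy_verts_ncard hB
  omega

lemma sharedK_subset (hv : 0 < v) : sharedK H H n ⊆ Set.Icc 1 (H.edgeSet.ncard) := by
  rintro k ⟨hk1, A, B, hA, hB, rfl⟩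
  exact ⟨hk1, sharedEdges_le hA⟩

lemma gamma_pos (hv : 0 < v) (hvn : v ≤ n) (α : ℝ) (hα : 0 < α)
    (he : H.edgeSet.Nonempty) (hbal : StrictlyBalanced H)
    (hdens : (H.edgeSet.ncard : ℝ) / (v : ℝ) < α) :
    0 < sInf {x : ℝ | ∃ k ∈ sharedK H H n,
      x = (minSharedVerts H H n k : ℝ) - (k : ℝ) / α} := by
  set eH := H.edgeSet.ncard with heH
  have heH1 : 1 ≤ eH := Set.ncard_pos (Set.toFinite _) |>.2 he
  set Γ := {x : ℝ | ∃ k ∈ sharedK H H n, x = (minSharedVerts H H n k : ℝ) - (k : ℝ) / α}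
  have hΓ : Γ = (fun k : ℕ => (minSharedVerts H H n k : ℝ) - (k : ℝ) / α) '' (sharedK H H n) := by
    ext x; simp [Γ, Set.mem_image, eq_comm]
  have hfin : Γ.Finite := by
    rw [hΓ]
    exact Set.Finite.image _ ((Set.finite_Icc 1 eH).subset (sharedK_subset hv))
  have hne : Γ.Nonempty := by
    have hinj : Function.Injective (Fin.castLE hvn) := Fin.castLE_injective hvn
    have hcopy := isCopy_copyOfFun (H := H) _ hinj
    refine ⟨(minSharedVerts H H n eH : ℝ) - (eH : ℝ) / α, eH, ⟨heH1, _, _, hcopy, hcopy, sharedEdges_self hcopy⟩, rfl⟩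
  have hpos : ∀ x ∈ Γ, 0 < x := by
    rintro x ⟨k, hk, rfl⟩
    obtain ⟨hk1, A0, B0, hA0, hB0, hke⟩ := hk
    have hMne : {m | ∃ A B : (⊤ : SimpleGraph (Fin n)).Subgraph,
        IsCopy H A ∧ IsCopy H B ∧ sharedEdges A B = k ∧ sharedVerts A B = m}.Nonempty :=
      ⟨sharedVerts A0 B0, A0, B0, hA0, hB0, hke, rfl⟩
    obtain ⟨A, B, hA, hB, hkeq, hmeq⟩ := Nat.sInf_mem hMne
    rw [minSharedVerts, ← hmeq]
    have hd := shared_density (B := B) hv hbal hA (by omega)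
    rw [hkeq] at hd
    have hl : 0 < sharedVerts A B := sharedVerts_pos (by omega)
    have hv0 : (0:ℝ) < v := by exact_mod_cast hv
    have hl0 : (0:ℝ) < sharedVerts A B := by exact_mod_cast hl
    have hdens' : (eH : ℝ) < α * v := by
      rw [div_lt_iff₀ hv0] at hdens
      linarith
    have hkα : (k : ℝ) < α * sharedVerts A B := by
      nlinarith [hd, hl0, hv0]
    rw [sub_pos, div_lt_iff₀ hα]
    linarith [hkα]
  exact hpos _ (hne.csInf_mem hfin)

end Gamma

section Counting
variable {n v : ℕ} {H : SimpleGraph (Fin v)}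

noncomputable instance : Fintype ((⊤ : SimpleGraph (Fin n)).Subgraph) := Fintype.ofFinite _

noncomputable def subsetEmb (v : ℕ) (s : Finset (Fin n)) (h : s.card = v) : Fin v → Fin n :=
  fun a => ↑(s.equivFin.symm (Fin.cast h.symm a))

lemma subsetEmb_injective (s : Finset (Fin n)) (h : s.card = v) :
    Function.Injective (subsetEmb v s h) := by
  intro a b hab
  have h1 : s.equivFin.symm (Fin.cast h.symm a) = s.equivFin.symm (Fin.cast h.symm b) :=
    Subtype.ext hab
  have h2 := s.equivFin.symm.injective h1
  exact (Fin.cast_injective h.symm) h2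

lemma subsetEmb_range (s : Finset (Fin n)) (h : s.card = v) :
    Set.range (subsetEmb v s h) = ↑s := by
  ext x
  constructor
  · rintro ⟨a, rfl⟩
    exact (s.equivFin.symm (Fin.cast h.symm a)).2
  · intro hx
    refine ⟨Fin.cast h (s.equivFin ⟨x, hx⟩), ?_⟩
    simp [subsetEmb]

open Classical in
lemma copies_card_lower :
    n.choose v ≤ (Finset.univ.filter
      (fun B : (⊤ : SimpleGraph (Fin n)).Subgraph => IsCopy H B)).card := by
  classical
  have key := Finset.card_le_card_of_injOn
    (f := fun s : Finset (Fin n) =>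
      if h : s.card = v then copyOfFun H (subsetEmb v s h) (subsetEmb_injective s h)
      else ⊤)
    (s := Finset.univ.powersetCard v)
    (t := Finset.univ.filter (fun B : (⊤ : SimpleGraph (Fin n)).Subgraph => IsCopy H B))
    ?_ ?_
  · rwa [Finset.card_powersetCard, Finset.card_univ, Fintype.card_fin] at key
  · intro s hs
    rw [Finset.mem_coe, Finset.mem_powersetCard_univ] at hs
    dsimp only
    rw [dif_pos hs, Finset.mem_coe, Finset.mem_filter]
    exact ⟨Finset.mem_univ _, isCopy_copyOfFun _ _⟩
  · intro s hs t ht hst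
    rw [Finset.mem_coe, Finset.mem_powersetCard_univ] at hs ht
    dsimp only at hst
    rw [dif_pos hs, dif_pos ht] at hst
    have := congrArg SimpleGraph.Subgraph.verts hst
    rw [copyOfFun_verts, copyOfFun_verts, subsetEmb_range, subsetEmb_range] at this
    exact_mod_cast this

noncomputable def isoOfCopy (A : (⊤ : SimpleGraph (Fin n)).Subgraph) (hA : IsCopy H A) :
    A.coe ≃g H :=
  Classical.choice hA

noncomputable def embOfCopy (A : (⊤ : SimpleGraph (Fin n)).Subgraph) (hA : IsCopy H A) :
    Fin v → Fin n :=
  fun a => ↑((isoOfCopy A hA).symm a)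

lemma embOfCopy_injective (A : (⊤ : SimpleGraph (Fin n)).Subgraph) (hA : IsCopy H A) :
    Function.Injective (embOfCopy A hA) := by
  intro a b hab
  have := congrArg (isoOfCopy A hA) (Subtype.ext hab :
    (isoOfCopy A hA).symm a = (isoOfCopy A hA).symm b)
  simpa using this

lemma copyOfFun_embOfCopy (A : (⊤ : SimpleGraph (Fin n)).Subgraph) (hA : IsCopy H A) :
    copyOfFun H (embOfCopy A hA) (embOfCopy_injective A hA) = A :=
  (copy_eq_copyOfFun (isoOfCopy A hA)).symm

lemma embOfCopy_range (A : (⊤ : SimpleGraph (Fin n)).Subgraph) (hA : IsCopy H A) :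
    Set.range (embOfCopy A hA) = A.verts := by
  have := congrArg SimpleGraph.Subgraph.verts (copyOfFun_embOfCopy A hA)
  rw [copyOfFun_verts] at this
  exact this

lemma funPairs_count (hn : 0 < n) (s : ℕ) (hs0 : 0 < s) (hsn : s ≤ n) :
    {fg : (Fin v → Fin n) × (Fin v → Fin n) |
      (Set.range fg.1 ∪ Set.range fg.2).ncard ≤ s}.ncard ≤ n.choose s * (s ^ v) ^ 2 := by
  classical
  rw [show {fg : (Fin v → Fin n) × (Fin v → Fin n) |
      (Set.range fg.1 ∪ Set.range fg.2).ncard ≤ s}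
    = ↑(Finset.univ.filter (fun fg : (Fin v → Fin n) × (Fin v → Fin n) =>
      (Set.range fg.1 ∪ Set.range fg.2).ncard ≤ s)) by ext fg; simp]
  rw [Set.ncard_coe_finset]
  have hsub : Finset.univ.filter (fun fg : (Fin v → Fin n) × (Fin v → Fin n) =>
        (Set.range fg.1 ∪ Set.range fg.2).ncard ≤ s)
      ⊆ (Finset.univ.powersetCard s).biUnion (fun U =>
        Finset.univ.filter (fun fg : (Fin v → Fin n) × (Fin v → Fin n) =>
          (∀ a, fg.1 a ∈ U) ∧ (∀ a, fg.2 a ∈ U))) := by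
    intro fg hfg
    rw [Finset.mem_filter] at hfg
    set T : Finset (Fin n) := Finset.image fg.1 Finset.univ ∪ Finset.image fg.2 Finset.univ with hT
    have hTcoe : (↑T : Set (Fin n)) = Set.range fg.1 ∪ Set.range fg.2 := by
      simp [hT, Set.image_univ]
    have hTcard : T.card ≤ s := by
      rw [← Set.ncard_coe_finset, hTcoe]
      exact hfg.2
    obtain ⟨U, hTU, hUcard⟩ := Finset.exists_superset_card_eq hTcard
      (by rwa [Fintype.card_fin])
    rw [Finset.mem_biUnion]
    refine ⟨U, Finset.mem_powersetCard_univ.2 hUcard, ?_⟩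
    rw [Finset.mem_filter]
    refine ⟨Finset.mem_univ _, fun a => hTU ?_, fun a => hTU ?_⟩
    · exact Finset.mem_union_left _ (Finset.mem_image_of_mem _ (Finset.mem_univ a))
    · exact Finset.mem_union_right _ (Finset.mem_image_of_mem _ (Finset.mem_univ a))
  calc (Finset.univ.filter _).card
      ≤ _ := Finset.card_le_card hsub
    _ ≤ ∑ U ∈ Finset.univ.powersetCard s, (Finset.univ.filter
          (fun fg : (Fin v → Fin n) × (Fin v → Fin n) =>
            (∀ a, fg.1 a ∈ U) ∧ (∀ a, fg.2 a ∈ U))).card := Finset.card_biUnion_le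
    _ ≤ ∑ U ∈ Finset.univ.powersetCard s, (s ^ v) ^ 2 := by
        refine Finset.sum_le_sum fun U hU => ?_
        have hUcard : U.card = s := Finset.mem_powersetCard_univ.1 hU
        have hUne : U.Nonempty := Finset.card_pos.1 (by omega)
        obtain ⟨u0, hu0⟩ := hUne
        have key := Finset.card_le_card_of_injOn
          (f := fun fg : (Fin v → Fin n) × (Fin v → Fin n) =>
            ((fun a => if h : fg.1 a ∈ U then (⟨fg.1 a, h⟩ : {x // x ∈ U}) else ⟨u0, hu0⟩),
             (fun a => if h : fg.2 a ∈ U then (⟨fg.2 a, h⟩ : {x // x ∈ U}) else ⟨u0, hu0⟩)))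
          (s := Finset.univ.filter (fun fg : (Fin v → Fin n) × (Fin v → Fin n) =>
            (∀ a, fg.1 a ∈ U) ∧ (∀ a, fg.2 a ∈ U)))
          (t := Finset.univ)
          (fun _ _ => Finset.mem_univ _) ?_
        · calc (Finset.univ.filter _).card ≤ _ := key
            _ = (s ^ v) ^ 2 := by
              rw [Finset.card_univ, Fintype.card_prod, Fintype.card_fun, Fintype.card_coe,
                Fintype.card_fin, hUcard, sq]
        · intro fg hfg fg' hfg' heq
          rw [Finset.mem_coe, Finset.mem_filter] at hfg hfg'
          obtain ⟨-, h1, h2⟩ := hfg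
          obtain ⟨-, h1', h2'⟩ := hfg'
          have e1 := congrArg Prod.fst heq
          have e2 := congrArg Prod.snd heq
          ext a
          · have := congrFun e1 a
            dsimp only at this
            rw [dif_pos (h1 a), dif_pos (h1' a)] at this
            exact congrArg Fin.val (congrArg Subtype.val this)
          · have := congrFun e2 a
            dsimp only at this
            rw [dif_pos (h2 a), dif_pos (h2' a)] at this
            exact congrArg Fin.val (congrArg Subtype.val this)
    _ = n.choose s * (s ^ v) ^ 2 := by
        rw [Finset.sum_const, Finset.card_powersetCard, Finset.card_univ, Fintype.card_fin,
          smul_eq_mul]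

lemma pair_count_upper (hn : 0 < n) (k s : ℕ) (hs0 : 0 < s) (hsn : s ≤ n)
    (hpair : ∀ A B : (⊤ : SimpleGraph (Fin n)).Subgraph, IsCopy H A → IsCopy H B →
      sharedEdges A B = k → (A.verts ∪ B.verts).ncard ≤ s) :
    {AB : (⊤ : SimpleGraph (Fin n)).Subgraph × (⊤ : SimpleGraph (Fin n)).Subgraph |
        IsCopy H AB.1 ∧ IsCopy H AB.2 ∧ sharedEdges AB.1 AB.2 = k}.ncard
      ≤ n.choose s * (s ^ v) ^ 2 := by
  classical
  set F : (⊤ : SimpleGraph (Fin n)).Subgraph × (⊤ : SimpleGraph (Fin n)).Subgraph →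
      (Fin v → Fin n) × (Fin v → Fin n) := fun AB =>
    ((if h : IsCopy H AB.1 then embOfCopy AB.1 h else fun _ => ⟨0, hn⟩),
     (if h : IsCopy H AB.2 then embOfCopy AB.2 h else fun _ => ⟨0, hn⟩)) with hF
  refine le_trans (Set.ncard_le_ncard_of_injOn F ?_ ?_ (Set.toFinite _))
    (funPairs_count hn s hs0 hsn)
  · rintro ⟨A, B⟩ ⟨hA, hB, hk⟩
    simp only [hF, Set.mem_setOf_eq, dif_pos hA, dif_pos hB]
    rw [embOfCopy_range A hA, embOfCopy_range B hB]
    exact hpair A B hA hB hk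
  · rintro ⟨A, B⟩ ⟨hA, hB, -⟩ ⟨A', B'⟩ ⟨hA', hB', -⟩ heq
    simp only [hF, Prod.mk.injEq, dif_pos hA, dif_pos hB, dif_pos hA', dif_pos hB'] at heq
    have hAeq : A = A' := by
      rw [← copyOfFun_embOfCopy A hA, ← copyOfFun_embOfCopy A' hA']
      congr 1
      exact heq.1
    have hBeq : B = B' := by
      rw [← copyOfFun_embOfCopy B hB, ← copyOfFun_embOfCopy B' hB']
      congr 1
      exact heq.2
    rw [hAeq, hBeq]

end Counting




open MeasureTheory

section Moments
variable {n v : ℕ} {H : SimpleGraph (Fin v)} {p : ℝ}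

lemma edge_subset_iff (B : (⊤ : SimpleGraph (Fin n)).Subgraph) (ω : EdgeSpace n) :
    B.edgeSet ⊆ (erGraph ω).edgeSet
      ↔ ∀ e : {e : Sym2 (Fin n) // ¬ e.IsDiag}, ↑e ∈ B.edgeSet → ω e = true := by
  constructor
  · intro h e he
    have := h he
    rw [erGraph, SimpleGraph.edgeSet_fromEdgeSet] at this
    obtain ⟨⟨h', hw⟩, -⟩ := this
    exact hw
  · intro h e' he'
    have hnd : ¬ e'.IsDiag :=
      SimpleGraph.not_isDiag_of_mem_edgeSet _ (B.edgeSet_subset he')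
    rw [erGraph, SimpleGraph.edgeSet_fromEdgeSet]
    exact ⟨⟨hnd, h ⟨e', hnd⟩ he'⟩, hnd⟩

open Classical in
noncomputable def edgeCoords (B : (⊤ : SimpleGraph (Fin n)).Subgraph) :
    Finset {e : Sym2 (Fin n) // ¬ e.IsDiag} :=
  Finset.univ.filter (fun e => ↑e ∈ B.edgeSet)

lemma edgeCoords_card (B : (⊤ : SimpleGraph (Fin n)).Subgraph) :
    (edgeCoords B).card = B.edgeSet.ncard := by
  classical
  have himg : B.edgeSet = ↑((edgeCoords B).image Subtype.val) := by
    ext e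
    simp only [Finset.coe_image, Set.mem_image, Finset.mem_coe, edgeCoords, Finset.mem_filter,
      Finset.mem_univ, true_and]
    constructor
    · intro he
      exact ⟨⟨e, SimpleGraph.not_isDiag_of_mem_edgeSet _ (B.edgeSet_subset he)⟩, he, rfl⟩
    · rintro ⟨c, hc, rfl⟩
      exact hc
  rw [himg, Set.ncard_coe_finset, Finset.card_image_of_injective _ Subtype.val_injective]

lemma edgeCoords_union (A B : (⊤ : SimpleGraph (Fin n)).Subgraph) :
    (edgeCoords A ∪ edgeCoords B).card
      = A.edgeSet.ncard + B.edgeSet.ncard - sharedEdges A B := by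
  classical
  have hint : edgeCoords A ∩ edgeCoords B = edgeCoords (A ⊓ B) := by
    ext e
    simp [edgeCoords, SimpleGraph.Subgraph.edgeSet_inf]
  have h1 := Finset.card_union_add_card_inter (edgeCoords A) (edgeCoords B)
  rw [hint, edgeCoords_card] at h1
  have h2 : sharedEdges A B ≤ A.edgeSet.ncard := by
    rw [sharedEdges]
    exact Set.ncard_le_ncard (fun e he => by
      rw [SimpleGraph.Subgraph.edgeSet_inf] at he; exact he.1) (Set.toFinite _)
  rw [edgeCoords_card, edgeCoords_card] at h1
  rw [sharedEdges] at h2 ⊢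
  omega

lemma event_toReal (h0 : 0 ≤ p) (h1 : p ≤ 1) (B : (⊤ : SimpleGraph (Fin n)).Subgraph) :
    (erMeasure n p {ω | B.edgeSet ⊆ (erGraph ω).edgeSet}).toReal = p ^ B.edgeSet.ncard := by
  have hset : {ω : EdgeSpace n | B.edgeSet ⊆ (erGraph ω).edgeSet}
      = {ω | ∀ e ∈ edgeCoords B, ω e = true} := by
    ext ω
    rw [Set.mem_setOf_eq, Set.mem_setOf_eq, edge_subset_iff]
    constructor
    · intro h e he
      exact h e (by simpa [edgeCoords] using he)
    · intro h e he
      exact h e (by simpa [edgeCoords] using he)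
  rw [hset, erMeasure_cylinder_toReal n p h0 h1, edgeCoords_card]

lemma event_pair_toReal (h0 : 0 ≤ p) (h1 : p ≤ 1) (A B : (⊤ : SimpleGraph (Fin n)).Subgraph) :
    (erMeasure n p {ω | A.edgeSet ⊆ (erGraph ω).edgeSet ∧ B.edgeSet ⊆ (erGraph ω).edgeSet}).toReal
      = p ^ (A.edgeSet.ncard + B.edgeSet.ncard - sharedEdges A B) := by
  have hset : {ω : EdgeSpace n | A.edgeSet ⊆ (erGraph ω).edgeSet ∧ B.edgeSet ⊆ (erGraph ω).edgeSet}
      = {ω | ∀ e ∈ edgeCoords A ∪ edgeCoords B, ω e = true} := by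
    ext ω
    rw [Set.mem_setOf_eq, Set.mem_setOf_eq, edge_subset_iff, edge_subset_iff]
    constructor
    · rintro ⟨hA, hB⟩ e he
      rcases Finset.mem_union.1 he with he | he
      · exact hA e (by simpa [edgeCoords] using he)
      · exact hB e (by simpa [edgeCoords] using he)
    · intro h
      constructor
      · intro e he
        exact h e (Finset.mem_union_left _ (by simpa [edgeCoords] using he))
      · intro e he
        exact h e (Finset.mem_union_right _ (by simpa [edgeCoords] using he))
  rw [hset, erMeasure_cylinder_toReal n p h0 h1, edgeCoords_union]

open Classical in
noncomputable def copiesFinset (n : ℕ) (H : SimpleGraph (Fin v)) :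
    Finset ((⊤ : SimpleGraph (Fin n)).Subgraph) :=
  Finset.univ.filter (fun B => IsCopy H B)

open Classical in
lemma W_sum (ω : EdgeSpace n) :
    (numCopies H (erGraph ω) : ℝ)
      = ∑ B ∈ copiesFinset n H, (if B.edgeSet ⊆ (erGraph ω).edgeSet then (1:ℝ) else 0) := by
  classical
  rw [numCopies]
  have : {B : (⊤ : SimpleGraph (Fin n)).Subgraph | IsCopy H B ∧ B.edgeSet ⊆ (erGraph ω).edgeSet}
      = ↑((copiesFinset n H).filter (fun B => B.edgeSet ⊆ (erGraph ω).edgeSet)) := by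
    ext B
    simp [copiesFinset, and_assoc]
  rw [this, Set.ncard_coe_finset, Finset.card_filter]
  push_cast
  exact Finset.sum_congr rfl fun B _ => by split <;> simp

lemma integral_ite_prop (μ : Measure (EdgeSpace n)) [IsFiniteMeasure μ]
    (P : EdgeSpace n → Prop) {dec : DecidablePred P} :
    ∫ ω, (@ite ℝ (P ω) (dec ω) 1 0) ∂μ = (μ {ω | P ω}).toReal := by
  have : (fun ω => @ite ℝ (P ω) (dec ω) 1 0) = Set.indicator {ω | P ω} (fun _ => (1:ℝ)) := by
    funext ω
    by_cases h : P ω <;> simp [h]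
  rw [this, integral_indicator_const _ MeasurableSet.of_discrete, smul_eq_mul, mul_one]
  rfl

lemma EW_formula (h0 : 0 ≤ p) (h1 : p ≤ 1) :
    ∫ ω, (numCopies H (erGraph ω) : ℝ) ∂erMeasure n p
      = (copiesFinset n H).card * p ^ H.edgeSet.ncard := by
  classical
  haveI : IsProbabilityMeasure (erMeasure n p) := erMeasure_prob n p h0 h1
  rw [integral_congr_ae (Filter.EventuallyEq.of_eq (funext fun ω => W_sum ω)),
    integral_finset_sum _ (fun B _ => Integrable.of_finite)]
  have : ∀ B ∈ copiesFinset n H,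
      ∫ ω, (if B.edgeSet ⊆ (erGraph ω).edgeSet then (1:ℝ) else 0) ∂erMeasure n p
        = p ^ H.edgeSet.ncard := by
    intro B hB
    simp only [copiesFinset, Finset.mem_filter] at hB
    refine Eq.trans (integral_ite_prop (erMeasure n p)
      (fun ω => B.edgeSet ⊆ (erGraph ω).edgeSet)) ?_
    rw [event_toReal h0 h1, copy_edge_ncard hB.2]
  rw [Finset.sum_congr rfl this, Finset.sum_const, nsmul_eq_mul]

lemma EW2_formula (h0 : 0 ≤ p) (h1 : p ≤ 1) :
    ∫ ω, (numCopies H (erGraph ω) : ℝ) ^ 2 ∂erMeasure n p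
      = ∑ AB ∈ copiesFinset n H ×ˢ copiesFinset n H,
          p ^ (2 * H.edgeSet.ncard - sharedEdges AB.1 AB.2) := by
  classical
  haveI : IsProbabilityMeasure (erMeasure n p) := erMeasure_prob n p h0 h1
  have hsq : ∀ ω : EdgeSpace n, (numCopies H (erGraph ω) : ℝ) ^ 2
      = ∑ AB ∈ copiesFinset n H ×ˢ copiesFinset n H,
          (if AB.1.edgeSet ⊆ (erGraph ω).edgeSet ∧ AB.2.edgeSet ⊆ (erGraph ω).edgeSet
            then (1:ℝ) else 0) := by
    intro ω
    rw [sq, W_sum ω, Finset.sum_mul_sum, Finset.sum_product]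
    refine Finset.sum_congr rfl fun A _ => Finset.sum_congr rfl fun B _ => ?_
    by_cases hA : A.edgeSet ⊆ (erGraph ω).edgeSet <;>
      by_cases hB : B.edgeSet ⊆ (erGraph ω).edgeSet <;> simp [hA, hB]
  rw [integral_congr_ae (Filter.EventuallyEq.of_eq (funext hsq)),
    integral_finset_sum _ (fun AB _ => Integrable.of_finite)]
  refine Finset.sum_congr rfl fun AB hAB => ?_
  simp only [Finset.mem_product, copiesFinset, Finset.mem_filter] at hAB
  refine Eq.trans (integral_ite_prop (erMeasure n p)
    (fun ω => AB.1.edgeSet ⊆ (erGraph ω).edgeSet ∧ AB.2.edgeSet ⊆ (erGraph ω).edgeSet)) ?_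
  rw [event_pair_toReal h0 h1, copy_edge_ncard hAB.1.2, copy_edge_ncard hAB.2.2]
  congr 1
  omega

end Moments

section VarCheb
variable {n v : ℕ} {H : SimpleGraph (Fin v)} {p : ℝ}

lemma integral_sub_sq (μ : Measure (EdgeSpace n)) [IsProbabilityMeasure μ]
    (f : EdgeSpace n → ℝ) :
    ∫ ω, (f ω - ∫ x, f x ∂μ) ^ 2 ∂μ = (∫ ω, f ω ^ 2 ∂μ) - (∫ x, f x ∂μ) ^ 2 := by
  set m := ∫ x, f x ∂μ with hm
  have h1 : (fun ω => (f ω - m) ^ 2) = fun ω => f ω ^ 2 - (2 * m) * f ω + m ^ 2 := by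
    funext ω; ring
  rw [h1, integral_add (by exact (Integrable.of_finite).sub (Integrable.of_finite))
      (integrable_const _),
    integral_sub Integrable.of_finite Integrable.of_finite,
    integral_const_mul, integral_const, probReal_univ]
  simp only [ENNReal.toReal_one, one_smul, ← hm]
  ring

open Classical in
lemma var_le_sum (h0 : 0 ≤ p) (h1 : p ≤ 1) :
    (∫ ω, (numCopies H (erGraph ω) : ℝ) ^ 2 ∂erMeasure n p)
        - (∫ ω, (numCopies H (erGraph ω) : ℝ) ∂erMeasure n p) ^ 2
      ≤ ∑ k ∈ Finset.Icc 1 H.edgeSet.ncard,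
          (((copiesFinset n H ×ˢ copiesFinset n H).filter
            (fun AB => sharedEdges AB.1 AB.2 = k)).card : ℝ)
            * p ^ (2 * H.edgeSet.ncard - k) := by
  classical
  set eH := H.edgeSet.ncard with heH
  set P := copiesFinset n H ×ˢ copiesFinset n H with hP
  rw [EW2_formula h0 h1, EW_formula h0 h1]
  have hsq : ((copiesFinset n H).card * p ^ eH : ℝ) ^ 2 = ∑ _AB ∈ P, p ^ (2 * eH) := by
    rw [Finset.sum_const, hP, Finset.card_product, nsmul_eq_mul]
    push_cast
    ring
  rw [hsq, ← Finset.sum_sub_distrib]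
  have hle : ∀ AB ∈ P, p ^ (2 * eH - sharedEdges AB.1 AB.2) - p ^ (2 * eH)
      ≤ (if 1 ≤ sharedEdges AB.1 AB.2 then p ^ (2 * eH - sharedEdges AB.1 AB.2) else 0) := by
    intro AB hAB
    by_cases hk : 1 ≤ sharedEdges AB.1 AB.2
    · rw [if_pos hk]
      have : (0:ℝ) ≤ p ^ (2 * eH) := by positivity
      linarith
    · rw [if_neg hk]
      have : sharedEdges AB.1 AB.2 = 0 := by omega
      rw [this, Nat.sub_zero]
      simp
  refine le_trans (Finset.sum_le_sum hle) ?_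
  rw [Finset.sum_ite, Finset.sum_const_zero, add_zero]
  have hfib := Finset.sum_fiberwise_of_maps_to (g := fun AB :
      (⊤ : SimpleGraph (Fin n)).Subgraph × (⊤ : SimpleGraph (Fin n)).Subgraph =>
        sharedEdges AB.1 AB.2)
    (s := P.filter (fun AB => 1 ≤ sharedEdges AB.1 AB.2)) (t := Finset.Icc 1 eH)
    (f := fun AB => p ^ (2 * eH - sharedEdges AB.1 AB.2)) ?_
  · rw [← hfib]
    refine Finset.sum_le_sum fun k hk => ?_
    have hcongr : ∀ AB ∈ (P.filter (fun AB => 1 ≤ sharedEdges AB.1 AB.2)).filter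
        (fun AB => sharedEdges AB.1 AB.2 = k),
        p ^ (2 * eH - sharedEdges AB.1 AB.2) = p ^ (2 * eH - k) := by
      intro AB hAB
      rw [Finset.mem_filter] at hAB
      rw [hAB.2]
    rw [Finset.sum_congr rfl hcongr, Finset.sum_const, nsmul_eq_mul]
    have hsub : (P.filter (fun AB => 1 ≤ sharedEdges AB.1 AB.2)).filter
        (fun AB => sharedEdges AB.1 AB.2 = k) ⊆ P.filter (fun AB => sharedEdges AB.1 AB.2 = k) := by
      intro AB hAB
      rw [Finset.mem_filter] at hAB ⊢
      rw [Finset.mem_filter] at hAB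
      exact ⟨hAB.1.1, hAB.2⟩
    have := Finset.card_le_card hsub
    have hp2 : (0:ℝ) ≤ p ^ (2 * eH - k) := by positivity
    exact mul_le_mul_of_nonneg_right (by exact_mod_cast this) hp2
  · intro AB hAB
    rw [Finset.mem_filter] at hAB
    have hcopy : IsCopy H AB.1 := by
      have := (Finset.mem_product.1 hAB.1).1
      simpa [copiesFinset] using this
    rw [Finset.mem_Icc]
    exact ⟨hAB.2, sharedEdges_le hcopy⟩

lemma cheb (μ : Measure (EdgeSpace n)) [IsProbabilityMeasure μ]
    (f : EdgeSpace n → ℝ) (ε : ℝ) (hε : 0 < ε) (m : ℝ) (hm : 0 < m) (hmdef : m = ∫ x, f x ∂μ) :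
    (μ {ω | ε ≤ |f ω / m - 1|}).toReal
      ≤ (∫ ω, (f ω - m) ^ 2 ∂μ) / (ε * m) ^ 2 := by
  have hsub : {ω | ε ≤ |f ω / m - 1|} ⊆ {ω | (ε * m) ^ 2 ≤ (f ω - m) ^ 2} := by
    intro ω hω
    rw [Set.mem_setOf_eq] at hω ⊢
    have habs : |f ω - m| = m * |f ω / m - 1| := by
      have hfm : f ω - m = m * (f ω / m - 1) := by field_simp
      rw [hfm, abs_mul, abs_of_pos hm]
    have h1 : ε * m ≤ |f ω - m| := by
      rw [habs]
      calc ε * m = m * ε := mul_comm _ _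
        _ ≤ m * |f ω / m - 1| := by
            exact mul_le_mul_of_nonneg_left hω hm.le
    calc (ε * m) ^ 2 ≤ |f ω - m| ^ 2 := by
          exact pow_le_pow_left₀ (by positivity) h1 2
      _ = (f ω - m) ^ 2 := sq_abs _
  have hmono : (μ {ω | ε ≤ |f ω / m - 1|}).toReal
      ≤ (μ {ω | (ε * m) ^ 2 ≤ (f ω - m) ^ 2}).toReal :=
    ENNReal.toReal_mono (measure_ne_top _ _) (measure_mono hsub)
  refine le_trans hmono ?_
  have hmarkov := mul_meas_ge_le_integral_of_nonneg (μ := μ)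
    (f := fun ω => (f ω - m) ^ 2)
    (Filter.Eventually.of_forall (fun ω => by positivity))
    Integrable.of_finite ((ε * m) ^ 2)
  rw [le_div_iff₀ (by positivity)]
  calc (μ {ω | (ε * m) ^ 2 ≤ (f ω - m) ^ 2}).toReal * (ε * m) ^ 2
      = (ε * m) ^ 2 * (μ {ω | (ε * m) ^ 2 ≤ (f ω - m) ^ 2}).toReal := mul_comm _ _
    _ ≤ _ := hmarkov

end VarCheb

section CoreBound
variable {n v : ℕ} {H : SimpleGraph (Fin v)}

lemma minSharedVerts_le (hv : 0 < v) {k : ℕ} (hk : k ∈ sharedK H H n) :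
    minSharedVerts H H n k ≤ v := by
  obtain ⟨hk1, A, B, hA, hB, hke⟩ := hk
  have hmem : sharedVerts A B ∈ {m | ∃ A B : (⊤ : SimpleGraph (Fin n)).Subgraph,
      IsCopy H A ∧ IsCopy H B ∧ sharedEdges A B = k ∧ sharedVerts A B = m} :=
    ⟨A, B, hA, hB, hke, rfl⟩
  have h1 : minSharedVerts H H n k ≤ sharedVerts A B := Nat.sInf_le hmem
  have h2 : sharedVerts A B ≤ (A.verts ∩ B.verts).ncard :=
    Set.ncard_le_ncard (support_inf_subset A B) (Set.toFinite _)
  have h3 : (A.verts ∩ B.verts).ncard ≤ A.verts.ncard :=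
    Set.ncard_le_ncard Set.inter_subset_left (Set.toFinite _)
  have h4 := copy_verts_ncard hA
  omega

open Classical in
lemma pairs_card_le (hv : 0 < v) (hn2v : 2 * v ≤ n) {k : ℕ} (hk : k ∈ sharedK H H n) :
    ((copiesFinset n H ×ˢ copiesFinset n H).filter
        (fun AB => sharedEdges AB.1 AB.2 = k)).card
      ≤ n ^ (2 * v - minSharedVerts H H n k) * (2 * v) ^ (2 * v) := by
  classical
  set ℓ := minSharedVerts H H n k with hℓ
  have hℓv : ℓ ≤ v := minSharedVerts_le hv hk
  set s := 2 * v - ℓ with hs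
  have hs0 : 0 < s := by omega
  have hsn : s ≤ n := by omega
  have hn0 : 0 < n := by omega
  have hpair : ∀ A B : (⊤ : SimpleGraph (Fin n)).Subgraph, IsCopy H A → IsCopy H B →
      sharedEdges A B = k → (A.verts ∪ B.verts).ncard ≤ s := by
    intro A B hA hB hke
    have h1 := verts_union_ncard_le hA hB
    have h2 : ℓ ≤ sharedVerts A B := Nat.sInf_le ⟨A, B, hA, hB, hke, rfl⟩
    omega
  have hcoe : (↑((copiesFinset n H ×ˢ copiesFinset n H).filter
        (fun AB => sharedEdges AB.1 AB.2 = k)) : Set _)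
      ⊆ {AB : (⊤ : SimpleGraph (Fin n)).Subgraph × (⊤ : SimpleGraph (Fin n)).Subgraph |
          IsCopy H AB.1 ∧ IsCopy H AB.2 ∧ sharedEdges AB.1 AB.2 = k} := by
    intro AB hAB
    simp only [Finset.mem_coe, Finset.mem_filter, Finset.mem_product, copiesFinset,
      Finset.mem_filter, Finset.mem_univ, true_and] at hAB
    exact ⟨hAB.1.1, hAB.1.2, hAB.2⟩
  have h1 : ((copiesFinset n H ×ˢ copiesFinset n H).filter
        (fun AB => sharedEdges AB.1 AB.2 = k)).card
      ≤ n.choose s * (s ^ v) ^ 2 := by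
    rw [← Set.ncard_coe_finset]
    exact le_trans (Set.ncard_le_ncard hcoe (Set.toFinite _))
      (pair_count_upper hn0 k s hs0 hsn hpair)
  refine le_trans h1 ?_
  have h2 : n.choose s ≤ n ^ s := Nat.choose_le_pow n s
  have h3 : (s ^ v) ^ 2 ≤ (2 * v) ^ (2 * v) := by
    rw [← pow_mul]
    calc s ^ (v * 2) ≤ (2 * v) ^ (v * 2) := Nat.pow_le_pow_left (by omega) _
      _ = (2 * v) ^ (2 * v) := by ring_nf
  exact Nat.mul_le_mul h2 h3

lemma core_bound (hv : 0 < v) (c α : ℝ) (hc : 0 < c) (hα : 0 < α)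
    {p : ℝ} (hp0 : 0 < p) (hp1 : p ≤ 1)
    (hn2v : 2 * v ≤ n)
    (hplow : c / 2 * (n : ℝ) ^ (-α⁻¹ : ℝ) ≤ p)
    (γ : ℝ)
    (hγle : ∀ k ∈ sharedK H H n, γ ≤ (minSharedVerts H H n k : ℝ) - (k : ℝ) / α) :
    ∑ k ∈ Finset.Icc 1 H.edgeSet.ncard,
        (((copiesFinset n H ×ˢ copiesFinset n H).filter
          (fun AB => sharedEdges AB.1 AB.2 = k)).card : ℝ) * p ^ (2 * H.edgeSet.ncard - k)
      ≤ ((H.edgeSet.ncard : ℝ) * (((2*v:ℕ):ℝ) ^ (2*v) * (max 1 (2/c)) ^ (2 * H.edgeSet.ncard)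
            * (4:ℝ) ^ v * ((Nat.factorial v : ℝ)) ^ 2))
          * (n:ℝ) ^ (-γ) * (((copiesFinset n H).card : ℝ) * p ^ H.edgeSet.ncard) ^ 2 := by
  classical
  set eH := H.edgeSet.ncard with heH
  set N := (copiesFinset n H).card with hN
  have hn0 : 0 < n := by omega
  have hn0R : (0:ℝ) < n := by exact_mod_cast hn0
  have hn1R : (1:ℝ) ≤ n := by exact_mod_cast hn0
  -- lower bound on N
  have hNlow : ((n:ℝ)/2) ^ v / (Nat.factorial v : ℝ) ≤ N := by
    have hchoose : n.choose v ≤ N := copies_card_lower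
    have hdesc : (n + 1 - v) ^ v ≤ Nat.factorial v * n.choose v := by
      rw [← Nat.descFactorial_eq_factorial_mul_choose]
      exact Nat.pow_sub_le_descFactorial n v
    have hcast : ((n + 1 - v : ℕ) : ℝ) = (n:ℝ) + 1 - v := by
      have : v ≤ n + 1 := by omega
      push_cast [Nat.cast_sub this]
      ring
    have hhalf : (n:ℝ)/2 ≤ ((n + 1 - v : ℕ) : ℝ) := by
      rw [hcast]
      have : (v:ℝ) ≤ n/2 := by
        have : (2*v : ℕ) ≤ (n:ℕ) := hn2v
        have h2 : ((2*v : ℕ):ℝ) ≤ (n:ℝ) := by exact_mod_cast this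
        push_cast at h2
        linarith
      linarith
    have h1 : ((n:ℝ)/2) ^ v ≤ ((n + 1 - v : ℕ) : ℝ) ^ v :=
      pow_le_pow_left₀ (by positivity) hhalf v
    have h2 : ((n + 1 - v : ℕ) : ℝ) ^ v ≤ (Nat.factorial v : ℝ) * n.choose v := by
      exact_mod_cast hdesc
    have h3 : (n.choose v : ℝ) ≤ N := by exact_mod_cast hchoose
    rw [div_le_iff₀ (by positivity : (0:ℝ) < (Nat.factorial v : ℝ))]
    calc ((n:ℝ)/2) ^ v ≤ (Nat.factorial v : ℝ) * n.choose v := le_trans h1 h2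
      _ ≤ (Nat.factorial v : ℝ) * N := by
          exact mul_le_mul_of_nonneg_left h3 (by positivity)
      _ = N * Nat.factorial v := mul_comm _ _
  -- per-term bound
  have hterm : ∀ k ∈ Finset.Icc 1 eH,
      (((copiesFinset n H ×ˢ copiesFinset n H).filter
        (fun AB => sharedEdges AB.1 AB.2 = k)).card : ℝ) * p ^ (2 * eH - k)
      ≤ (((2*v:ℕ):ℝ) ^ (2*v) * (max 1 (2/c)) ^ (2 * eH) * (4:ℝ) ^ v
          * ((Nat.factorial v : ℝ)) ^ 2) * (n:ℝ) ^ (-γ) * ((N:ℝ) * p ^ eH) ^ 2 := by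
    intro k hk
    rw [Finset.mem_Icc] at hk
    by_cases hkK : k ∈ sharedK H H n
    case neg =>
      -- the pair set must be empty
      have hempty : ((copiesFinset n H ×ˢ copiesFinset n H).filter
          (fun AB => sharedEdges AB.1 AB.2 = k)).card = 0 := by
        rw [Finset.card_eq_zero, Finset.filter_eq_empty_iff]
        intro AB hAB
        simp only [Finset.mem_product, copiesFinset, Finset.mem_filter, Finset.mem_univ,
          true_and] at hAB
        intro hke
        exact hkK ⟨hk.1, AB.1, AB.2, hAB.1, hAB.2, hke⟩
      rw [hempty]
      simp only [Nat.cast_zero, zero_mul]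
      have hng : (0:ℝ) ≤ (n:ℝ) ^ (-γ) := Real.rpow_nonneg hn0R.le _
      positivity
    case pos =>
      set ℓ := minSharedVerts H H n k with hℓ
      have hℓv : ℓ ≤ v := minSharedVerts_le hv hkK
      have hcard := pairs_card_le hv hn2v hkK
      have hcardR : (((copiesFinset n H ×ˢ copiesFinset n H).filter
          (fun AB => sharedEdges AB.1 AB.2 = k)).card : ℝ)
          ≤ (n:ℝ) ^ ((2 * v - ℓ : ℕ):ℝ) * ((2*v:ℕ):ℝ) ^ (2*v) := by
        rw [Real.rpow_natCast]
        exact_mod_cast hcard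
      -- bound p ^ (2 eH - k) = p^{2eH} / p^k
      have hkle : k ≤ 2 * eH := by omega
      have hpsub : p ^ (2 * eH - k) = p ^ (2 * eH) / p ^ k := pow_sub₀ p hp0.ne' hkle
      -- lower bound p^k
      have hnra : (0:ℝ) < (n:ℝ) ^ (-α⁻¹ : ℝ) := Real.rpow_pos_of_pos hn0R _
      have hpklow : (c/2 * (n:ℝ) ^ (-α⁻¹ : ℝ)) ^ k ≤ p ^ k :=
        pow_le_pow_left₀ (by positivity) hplow k
      have hinv : 1 / p ^ k ≤ (max 1 (2/c)) ^ (2 * eH) * (n:ℝ) ^ ((k:ℝ)/α) := by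
        rw [div_le_iff₀ (by positivity)]
        have hlow2 : (0:ℝ) < (c/2 * (n:ℝ) ^ (-α⁻¹ : ℝ)) ^ k := by positivity
        have h1 : (1:ℝ) ≤ ((max 1 (2/c)) ^ (2*eH) * (n:ℝ) ^ ((k:ℝ)/α))
            * ((c/2 * (n:ℝ) ^ (-α⁻¹ : ℝ)) ^ k) := by
          have hexp : ((n:ℝ) ^ (-α⁻¹ : ℝ)) ^ k = (n:ℝ) ^ (-(k:ℝ)/α) := by
            rw [← Real.rpow_natCast ((n:ℝ) ^ (-α⁻¹ : ℝ)) k, ← Real.rpow_mul hn0R.le]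
            congr 1
            field_simp
          have hmc : (2/c) ^ k ≤ (max 1 (2/c)) ^ (2*eH) := by
            calc (2/c) ^ k ≤ (max 1 (2/c)) ^ k :=
                  pow_le_pow_left₀ (by positivity) (le_max_right _ _) k
              _ ≤ (max 1 (2/c)) ^ (2*eH) :=
                  pow_le_pow_right₀ (le_max_left _ _) (by omega)
          have hnn : (n:ℝ) ^ ((k:ℝ)/α) * (n:ℝ) ^ (-(k:ℝ)/α) = 1 := by
            rw [← Real.rpow_add hn0R, show (k:ℝ)/α + -(k:ℝ)/α = 0 by ring, Real.rpow_zero]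
          calc (1:ℝ) = (2/c) ^ k * (c/2) ^ k * ((n:ℝ) ^ ((k:ℝ)/α) * (n:ℝ) ^ (-(k:ℝ)/α)) := by
                rw [hnn, mul_one, ← mul_pow]
                field_simp
                exact (one_pow k).symm
            _ ≤ (max 1 (2/c)) ^ (2*eH) * (c/2) ^ k * ((n:ℝ) ^ ((k:ℝ)/α) * (n:ℝ) ^ (-(k:ℝ)/α)) := by
                have hc2 : (0:ℝ) ≤ (c/2) ^ k := by positivity
                have hrest : (0:ℝ) ≤ (n:ℝ) ^ ((k:ℝ)/α) * (n:ℝ) ^ (-(k:ℝ)/α) := by positivity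
                exact mul_le_mul_of_nonneg_right
                  (mul_le_mul_of_nonneg_right hmc hc2) hrest
            _ = ((max 1 (2/c)) ^ (2*eH) * (n:ℝ) ^ ((k:ℝ)/α))
                * ((c/2) ^ k * (n:ℝ) ^ (-(k:ℝ)/α)) := by ring
            _ = ((max 1 (2/c)) ^ (2*eH) * (n:ℝ) ^ ((k:ℝ)/α))
                * ((c/2 * (n:ℝ) ^ (-α⁻¹ : ℝ)) ^ k) := by
                rw [mul_pow, hexp]
        calc (1:ℝ) ≤ ((max 1 (2/c)) ^ (2*eH) * (n:ℝ) ^ ((k:ℝ)/α))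
              * ((c/2 * (n:ℝ) ^ (-α⁻¹ : ℝ)) ^ k) := h1
          _ ≤ ((max 1 (2/c)) ^ (2*eH) * (n:ℝ) ^ ((k:ℝ)/α)) * p ^ k := by
              exact mul_le_mul_of_nonneg_left hpklow (by positivity)
          _ = (max 1 (2/c)) ^ (2 * eH) * (n:ℝ) ^ ((k:ℝ)/α) * p ^ k := rfl
      -- lower bound N^2
      have hN2 : (n:ℝ) ^ (2*v) / ((4:ℝ) ^ v * (Nat.factorial v : ℝ) ^ 2) ≤ (N:ℝ) ^ 2 := by
        have h0 : (0:ℝ) ≤ ((n:ℝ)/2) ^ v / (Nat.factorial v : ℝ) := by positivity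
        have hsq' := mul_self_le_mul_self h0 hNlow
        have h4 : (4:ℝ) ^ v = 2 ^ v * 2 ^ v := by rw [← mul_pow]; norm_num
        calc (n:ℝ) ^ (2*v) / ((4:ℝ) ^ v * (Nat.factorial v : ℝ) ^ 2)
            = (((n:ℝ)/2) ^ v / (Nat.factorial v : ℝ)) * (((n:ℝ)/2) ^ v / (Nat.factorial v : ℝ)) := by
              rw [two_mul, pow_add, h4, div_pow]
              field_simp
          _ ≤ (N:ℝ) * (N:ℝ) := hsq'
          _ = (N:ℝ) ^ 2 := (sq (N:ℝ)).symm
      -- the exponent comparison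
      have hγk := hγle k hkK
      have hexple : ((2 * v - ℓ : ℕ):ℝ) + (k:ℝ)/α ≤ 2*v + (-γ) := by
        have hcast : ((2 * v - ℓ : ℕ):ℝ) = 2*(v:ℝ) - (ℓ:ℝ) := by
          have : ℓ ≤ 2 * v := by omega
          push_cast [Nat.cast_sub this]
          ring
        rw [hcast]
        have : γ ≤ (ℓ:ℝ) - (k:ℝ)/α := hγk
        linarith
      have hrpow : (n:ℝ) ^ ((2 * v - ℓ : ℕ):ℝ) * (n:ℝ) ^ ((k:ℝ)/α)
          ≤ (n:ℝ) ^ (2*v) * (n:ℝ) ^ (-γ) := by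
        rw [← Real.rpow_add hn0R]
        have h2v : ((n:ℝ)) ^ (2*v) = (n:ℝ) ^ ((2*v : ℕ):ℝ) := by
          rw [Real.rpow_natCast]
        rw [h2v, ← Real.rpow_add hn0R]
        apply Real.rpow_le_rpow_of_exponent_le hn1R
        push_cast
        push_cast at hexple
        linarith
      -- combine everything
      set Ck := ((2*v:ℕ):ℝ) ^ (2*v) * (max 1 (2/c)) ^ (2 * eH) * (4:ℝ) ^ v
          * ((Nat.factorial v : ℝ)) ^ 2 with hCk
      rw [hpsub]
      have hp2e : (0:ℝ) < p ^ (2*eH) := by positivity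
      have hcard0 : (0:ℝ) ≤ (((copiesFinset n H ×ˢ copiesFinset n H).filter
          (fun AB => sharedEdges AB.1 AB.2 = k)).card : ℝ) := by positivity
      calc (((copiesFinset n H ×ˢ copiesFinset n H).filter
            (fun AB => sharedEdges AB.1 AB.2 = k)).card : ℝ) * (p ^ (2*eH) / p ^ k)
          = (((copiesFinset n H ×ˢ copiesFinset n H).filter
            (fun AB => sharedEdges AB.1 AB.2 = k)).card : ℝ) * (1 / p ^ k) * p ^ (2*eH) := by
            ring
        _ ≤ ((n:ℝ) ^ ((2 * v - ℓ : ℕ):ℝ) * ((2*v:ℕ):ℝ) ^ (2*v))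
              * ((max 1 (2/c)) ^ (2 * eH) * (n:ℝ) ^ ((k:ℝ)/α)) * p ^ (2*eH) := by
            have hx : (0:ℝ) ≤ 1 / p ^ k := by positivity
            refine mul_le_mul_of_nonneg_right ?_ hp2e.le
            exact mul_le_mul hcardR hinv hx (by positivity)
        _ = ((2*v:ℕ):ℝ) ^ (2*v) * (max 1 (2/c)) ^ (2 * eH)
              * ((n:ℝ) ^ ((2 * v - ℓ : ℕ):ℝ) * (n:ℝ) ^ ((k:ℝ)/α)) * p ^ (2*eH) := by ring
        _ ≤ ((2*v:ℕ):ℝ) ^ (2*v) * (max 1 (2/c)) ^ (2 * eH)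
              * ((n:ℝ) ^ (2*v) * (n:ℝ) ^ (-γ)) * p ^ (2*eH) := by
            refine mul_le_mul_of_nonneg_right (mul_le_mul_of_nonneg_left hrpow ?_) hp2e.le
            positivity
        _ ≤ Ck * (n:ℝ) ^ (-γ) * ((N:ℝ) * p ^ eH) ^ 2 := by
            rw [mul_pow, ← pow_mul]
            have heH2 : eH * 2 = 2 * eH := by ring
            rw [heH2]
            have hNn : (n:ℝ) ^ (2*v) ≤ ((4:ℝ) ^ v * (Nat.factorial v : ℝ) ^ 2) * (N:ℝ) ^ 2 := by
              rw [div_le_iff₀ (by positivity)] at hN2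
              linarith [hN2]
            have hfac : (0:ℝ) ≤ ((2*v:ℕ):ℝ) ^ (2*v) * (max 1 (2/c)) ^ (2 * eH) := by positivity
            have hng : (0:ℝ) ≤ (n:ℝ) ^ (-γ) := Real.rpow_nonneg hn0R.le _
            calc ((2*v:ℕ):ℝ) ^ (2*v) * (max 1 (2/c)) ^ (2 * eH)
                  * ((n:ℝ) ^ (2*v) * (n:ℝ) ^ (-γ)) * p ^ (2*eH)
                ≤ ((2*v:ℕ):ℝ) ^ (2*v) * (max 1 (2/c)) ^ (2 * eH)
                  * ((((4:ℝ) ^ v * (Nat.factorial v : ℝ) ^ 2) * (N:ℝ) ^ 2) * (n:ℝ) ^ (-γ))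
                  * p ^ (2*eH) := by
                  refine mul_le_mul_of_nonneg_right (mul_le_mul_of_nonneg_left ?_ hfac) hp2e.le
                  exact mul_le_mul_of_nonneg_right hNn hng
              _ = Ck * (n:ℝ) ^ (-γ) * ((N:ℝ) ^ 2 * p ^ (2*eH)) := by
                  rw [hCk]; ring
  calc ∑ k ∈ Finset.Icc 1 eH, (((copiesFinset n H ×ˢ copiesFinset n H).filter
        (fun AB => sharedEdges AB.1 AB.2 = k)).card : ℝ) * p ^ (2 * eH - k)
      ≤ ∑ _k ∈ Finset.Icc 1 eH, (((2*v:ℕ):ℝ) ^ (2*v) * (max 1 (2/c)) ^ (2 * eH) * (4:ℝ) ^ v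
          * ((Nat.factorial v : ℝ)) ^ 2) * (n:ℝ) ^ (-γ) * ((N:ℝ) * p ^ eH) ^ 2 :=
        Finset.sum_le_sum hterm
    _ = (eH : ℝ) * ((((2*v:ℕ):ℝ)) ^ (2*v) * (max 1 (2/c)) ^ (2 * eH) * (4:ℝ) ^ v
          * ((Nat.factorial v : ℝ)) ^ 2) * (n:ℝ) ^ (-γ) * ((N:ℝ) * p ^ eH) ^ 2 := by
        rw [Finset.sum_const, Nat.card_Icc, nsmul_eq_mul]
        simp
        ring
end CoreBound

section Glue
variable {n v : ℕ} {H : SimpleGraph (Fin v)}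

lemma gammaSet_finite (α : ℝ) (heH1 : 1 ≤ H.edgeSet.ncard) :
    {x : ℝ | ∃ k ∈ sharedK H H n,
      x = (minSharedVerts H H n k : ℝ) - (k : ℝ) / α}.Finite := by
  have hΓ : {x : ℝ | ∃ k ∈ sharedK H H n,
      x = (minSharedVerts H H n k : ℝ) - (k : ℝ) / α}
      = (fun k : ℕ => (minSharedVerts H H n k : ℝ) - (k : ℝ) / α) '' (sharedK H H n) := by
    ext x; simp [Set.mem_image, eq_comm]
  rw [hΓ]
  refine Set.Finite.image _ (Set.Finite.subset (Set.finite_Icc 1 H.edgeSet.ncard) ?_)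
  rintro k ⟨hk1, A, B, hA, hB, rfl⟩
  exact ⟨hk1, sharedEdges_le hA⟩

lemma copies_card_pos (hvn : v ≤ n) : 0 < (copiesFinset n H).card :=
  lt_of_lt_of_le (Nat.choose_pos hvn) copies_card_lower

lemma EW_lower (hv : 0 < v) (c α : ℝ) (hc : 0 < c) (hα : 0 < α)
    {p : ℝ} (hp0 : 0 < p) (hp1 : p ≤ 1) (hn2v : 2 * v ≤ n)
    (hplow : c / 2 * (n : ℝ) ^ (-α⁻¹ : ℝ) ≤ p) :
    (c/2) ^ H.edgeSet.ncard / (2 ^ v * (Nat.factorial v : ℝ))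
        * (n:ℝ) ^ ((v:ℝ) - (H.edgeSet.ncard : ℝ) / α)
      ≤ ((copiesFinset n H).card : ℝ) * p ^ H.edgeSet.ncard := by
  set eH := H.edgeSet.ncard with heH
  have hn0 : 0 < n := by omega
  have hn0R : (0:ℝ) < n := by exact_mod_cast hn0
  -- N lower bound (same as in core_bound)
  have hchoose : n.choose v ≤ (copiesFinset n H).card := copies_card_lower
  have hdesc : (n + 1 - v) ^ v ≤ Nat.factorial v * n.choose v := by
    rw [← Nat.descFactorial_eq_factorial_mul_choose]
    exact Nat.pow_sub_le_descFactorial n v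
  have hcast : ((n + 1 - v : ℕ) : ℝ) = (n:ℝ) + 1 - v := by
    have : v ≤ n + 1 := by omega
    push_cast [Nat.cast_sub this]
    ring
  have hhalf : (n:ℝ)/2 ≤ ((n + 1 - v : ℕ) : ℝ) := by
    rw [hcast]
    have h2 : ((2*v : ℕ):ℝ) ≤ (n:ℝ) := by exact_mod_cast hn2v
    push_cast at h2
    linarith
  have hNlow : ((n:ℝ)/2) ^ v / (Nat.factorial v : ℝ) ≤ ((copiesFinset n H).card : ℝ) := by
    rw [div_le_iff₀ (by positivity : (0:ℝ) < (Nat.factorial v : ℝ))]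
    calc ((n:ℝ)/2) ^ v ≤ ((n + 1 - v : ℕ) : ℝ) ^ v := pow_le_pow_left₀ (by positivity) hhalf v
      _ ≤ (Nat.factorial v : ℝ) * n.choose v := by exact_mod_cast hdesc
      _ ≤ (Nat.factorial v : ℝ) * ((copiesFinset n H).card : ℝ) := by
          exact mul_le_mul_of_nonneg_left (by exact_mod_cast hchoose) (by positivity)
      _ = ((copiesFinset n H).card : ℝ) * Nat.factorial v := mul_comm _ _
  have hplowpow : (c/2 * (n:ℝ) ^ (-α⁻¹ : ℝ)) ^ eH ≤ p ^ eH :=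
    pow_le_pow_left₀ (by positivity) hplow eH
  have hexp : ((n:ℝ) ^ (-α⁻¹ : ℝ)) ^ eH = (n:ℝ) ^ (-(eH:ℝ)/α) := by
    rw [← Real.rpow_natCast ((n:ℝ) ^ (-α⁻¹ : ℝ)) eH, ← Real.rpow_mul hn0R.le]
    congr 1
    field_simp
  calc (c/2) ^ eH / (2 ^ v * (Nat.factorial v : ℝ)) * (n:ℝ) ^ ((v:ℝ) - (eH : ℝ) / α)
      = (((n:ℝ)/2) ^ v / (Nat.factorial v : ℝ)) * ((c/2 * (n:ℝ) ^ (-α⁻¹ : ℝ)) ^ eH) := by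
        rw [mul_pow, hexp, div_pow]
        have hnv : (n:ℝ) ^ ((v:ℝ) - (eH:ℝ)/α) = (n:ℝ) ^ (v:ℕ) * (n:ℝ) ^ (-(eH:ℝ)/α) := by
          rw [← Real.rpow_natCast (n:ℝ) v, ← Real.rpow_add hn0R]
          congr 1
          ring
        rw [hnv]
        field_simp
        ring
        rw [mul_assoc, ← mul_pow]
        norm_num
    _ ≤ ((copiesFinset n H).card : ℝ) * p ^ eH := by
        refine mul_le_mul hNlow hplowpow (by positivity) (by positivity)

end Glue

/-- For a strictly balanced graph `H` of density `d_H < α` and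
`p = c n^{-1/α} (1 + o(1))`, the count `W` of copies of `H` satisfies `E(W) → ∞` and a
second-moment concentration bound `P(|W/E(W) − 1| ≥ ε) ≤ C ε^{-2} n^{-γ}` with
`γ = min_{k ∈ K} (ℓ_k − k/α) > 0`. -/
theorem subcritical_density_concentration
    (c α : ℝ) (hc : 0 < c) (hα : 0 < α)
    (p : ℕ → ℝ) (hp : ∀ n, 0 < p n ∧ p n < 1)
    -- `p = c n^{-1/α} (1 + o(1))`
    (hpc : Tendsto (fun n : ℕ => p n / (c * (n : ℝ) ^ (-α⁻¹ : ℝ))) atTop (nhds 1))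
    (v : ℕ) (H : SimpleGraph (Fin v)) (hv : 0 < v)
    (he : H.edgeSet.Nonempty)
    (hnoiso : ∀ x, ∃ y, H.Adj x y)
    (hbal : StrictlyBalanced H)
    -- `d_H < α`
    (hdens : (H.edgeSet.ncard : ℝ) / (v : ℝ) < α)
    (W : (n : ℕ) → EdgeSpace n → ℕ)
    (hWdef : ∀ n ω, W n ω = numCopies H (erGraph ω))
    (EW : ℕ → ℝ) (hEW : ∀ n, EW n = ∫ ω, (W n ω : ℝ) ∂erMeasure n (p n))
    -- `γ(n) = min_{k ∈ K} (ℓ_k − k/α)`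
    (γ : ℕ → ℝ)
    (hγ : ∀ n, γ n = sInf {x : ℝ | ∃ k ∈ sharedK H H n,
      x = (minSharedVerts H H n k : ℝ) - (k : ℝ) / α}) :
    Tendsto EW atTop atTop
      ∧ (∀ᶠ n in atTop, 0 < γ n)
      ∧ ∃ C > (0 : ℝ), ∀ ε > (0 : ℝ), ∀ᶠ n in atTop,
          (erMeasure n (p n) {ω | ε ≤ |(W n ω : ℝ) / EW n - 1|}).toReal
            ≤ C * ε ^ (-2 : ℤ) * (n : ℝ) ^ (-γ n) := by
  classical
  have heH1 : 1 ≤ H.edgeSet.ncard := (Set.ncard_pos (Set.toFinite _)).2 he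
  set eH := H.edgeSet.ncard with heHdef
  -- eventual lower bound on p
  have hplow : ∀ᶠ n : ℕ in atTop, c / 2 * (n : ℝ) ^ (-α⁻¹ : ℝ) ≤ p n := by
    have h12 : ∀ᶠ n : ℕ in atTop, 1/2 ≤ p n / (c * (n : ℝ) ^ (-α⁻¹ : ℝ)) :=
      Filter.Tendsto.eventually_const_le (by norm_num : (1:ℝ)/2 < 1) hpc
    filter_upwards [h12, eventually_ge_atTop 1] with n h1 hn1
    have hn0R : (0:ℝ) < n := by exact_mod_cast hn1
    have hd : (0:ℝ) < c * (n:ℝ) ^ (-α⁻¹ : ℝ) := by positivity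
    rw [le_div_iff₀ hd] at h1
    calc c/2 * (n:ℝ)^(-α⁻¹:ℝ) = 1/2 * (c * (n:ℝ)^(-α⁻¹:ℝ)) := by ring
      _ ≤ p n := h1
  -- identification of EW
  have hEWeq : ∀ n, EW n = ((copiesFinset n H).card : ℝ) * (p n) ^ eH := by
    intro n
    rw [hEW n]
    have hfW : (fun ω : EdgeSpace n => (W n ω : ℝ))
        = fun ω => (numCopies H (erGraph ω) : ℝ) := funext fun ω => by rw [hWdef]
    rw [show (∫ ω, (W n ω : ℝ) ∂erMeasure n (p n))
        = ∫ ω, (numCopies H (erGraph ω) : ℝ) ∂erMeasure n (p n) from by rw [hfW]]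
    exact EW_formula (hp n).1.le (hp n).2.le
  set δ : ℝ := (v:ℝ) - (eH:ℝ)/α with hδdef
  have hδ : 0 < δ := by
    have hv0R : (0:ℝ) < v := by exact_mod_cast hv
    rw [div_lt_iff₀ hv0R] at hdens
    have h1 : (eH:ℝ)/α < v := by
      rw [div_lt_iff₀ hα]
      linarith [hdens]
    rw [hδdef]
    linarith
  set c₃ : ℝ := (c/2) ^ eH / (2 ^ v * (Nat.factorial v : ℝ)) with hc₃def
  have hc₃ : 0 < c₃ := by positivity
  have hEWlow : ∀ᶠ n : ℕ in atTop, c₃ * (n:ℝ) ^ δ ≤ EW n := by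
    filter_upwards [hplow, eventually_ge_atTop (2*v)] with n h1 h2
    rw [hEWeq n]
    have := EW_lower (H := H) hv c α hc hα (hp n).1 (hp n).2.le h2 h1
    calc c₃ * (n:ℝ)^δ
        = (c/2) ^ eH / (2 ^ v * (Nat.factorial v : ℝ))
            * (n:ℝ) ^ ((v:ℝ) - (eH : ℝ) / α) := rfl
      _ ≤ _ := this
  refine ⟨?_, ?_, ?_⟩
  · exact tendsto_atTop_mono' atTop hEWlow
      (Tendsto.const_mul_atTop hc₃
        ((tendsto_rpow_atTop hδ).comp tendsto_natCast_atTop_atTop))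
  · filter_upwards [eventually_ge_atTop v] with n hn
    rw [hγ n]
    exact gamma_pos hv hn α hα he hbal hdens
  · set Cfull : ℝ := (eH:ℝ) * (((2*v:ℕ):ℝ)^(2*v) * (max 1 (2/c))^(2*eH)
        * (4:ℝ)^v * (Nat.factorial v:ℝ)^2) with hCfulldef
    have heHR : (0:ℝ) < (eH:ℝ) := by exact_mod_cast heH1
    have h2v0 : (0:ℝ) < ((2*v:ℕ):ℝ) := by
      have : 0 < 2*v := by omega
      exact_mod_cast this
    have hC : 0 < Cfull := by
      rw [hCfulldef]
      have hm1 : (0:ℝ) < max 1 (2/c) := lt_of_lt_of_le one_pos (le_max_left _ _)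
      positivity
    refine ⟨Cfull, hC, ?_⟩
    intro ε hε
    filter_upwards [hplow, eventually_ge_atTop (2*v), eventually_ge_atTop v,
      eventually_ge_atTop 1] with n h1 h2 hvn hn1
    have hp0 := (hp n).1
    have hp1 := (hp n).2.le
    haveI : IsProbabilityMeasure (erMeasure n (p n)) := erMeasure_prob n (p n) hp0.le hp1
    have hNpos : (0:ℝ) < ((copiesFinset n H).card : ℝ) := by
      exact_mod_cast copies_card_pos (H := H) hvn
    have hm : 0 < EW n := by
      rw [hEWeq n]
      exact mul_pos hNpos (pow_pos hp0 _)
    have hcheb := cheb (erMeasure n (p n)) (fun ω => (W n ω : ℝ)) ε hε (EW n) hm (hEW n)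
    have hfW : (fun ω : EdgeSpace n => (W n ω : ℝ))
        = fun ω => (numCopies H (erGraph ω) : ℝ) := funext fun ω => by rw [hWdef]
    have hEWg : EW n = ∫ x, (numCopies H (erGraph x) : ℝ) ∂erMeasure n (p n) := by
      rw [hEW n, hfW]
    have hvar : (∫ ω, ((W n ω : ℝ) - EW n)^2 ∂erMeasure n (p n))
        ≤ Cfull * (n:ℝ)^(-(γ n)) * (EW n)^2 := by
      have e1 : (∫ ω, ((W n ω : ℝ) - EW n)^2 ∂erMeasure n (p n))
          = (∫ ω, (numCopies H (erGraph ω):ℝ)^2 ∂erMeasure n (p n))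
            - (∫ ω, (numCopies H (erGraph ω):ℝ) ∂erMeasure n (p n))^2 := by
        rw [show (fun ω : EdgeSpace n => ((W n ω : ℝ) - EW n)^2)
            = fun ω => ((numCopies H (erGraph ω):ℝ)
              - ∫ x, (numCopies H (erGraph x) : ℝ) ∂erMeasure n (p n))^2 from
          funext fun ω => by rw [hWdef, hEWg]]
        exact integral_sub_sq _ _
      rw [e1]
      refine le_trans (var_le_sum hp0.le hp1) ?_
      have hγle : ∀ k ∈ sharedK H H n, γ n ≤ (minSharedVerts H H n k : ℝ) - (k:ℝ)/α := by
        intro k hk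
        rw [hγ n]
        exact csInf_le (gammaSet_finite α heH1).bddBelow ⟨k, hk, rfl⟩
      have hcore := core_bound (H := H) hv c α hc hα hp0 hp1 h2 h1 (γ n) hγle
      rw [← hEWeq n] at hcore
      calc ∑ k ∈ Finset.Icc 1 eH,
            (((copiesFinset n H ×ˢ copiesFinset n H).filter
              (fun AB => sharedEdges AB.1 AB.2 = k)).card : ℝ) * (p n) ^ (2 * eH - k)
          ≤ ((eH : ℝ) * (((2*v:ℕ):ℝ) ^ (2*v) * (max 1 (2/c)) ^ (2 * eH)
              * (4:ℝ) ^ v * ((Nat.factorial v : ℝ)) ^ 2))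
              * (n:ℝ) ^ (-(γ n)) * (EW n) ^ 2 := hcore
        _ = Cfull * (n:ℝ)^(-(γ n)) * (EW n)^2 := by rw [hCfulldef]
    have hz : ε ^ (-2 : ℤ) = (ε^2)⁻¹ := by
      rw [zpow_neg, zpow_ofNat]
    calc (erMeasure n (p n) {ω | ε ≤ |(W n ω : ℝ) / EW n - 1|}).toReal
        ≤ (∫ ω, ((W n ω : ℝ) - EW n)^2 ∂erMeasure n (p n)) / (ε * EW n)^2 := hcheb
      _ ≤ (Cfull * (n:ℝ)^(-(γ n)) * (EW n)^2) / (ε * EW n)^2 := by gcongr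
      _ = Cfull * ε ^ (-2 : ℤ) * (n : ℝ) ^ (-(γ n)) := by
          have hεne : ε ≠ 0 := ne_of_gt hε
          have hEWne : EW n ≠ 0 := ne_of_gt hm
          rw [hz, mul_pow]
          field_simp
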